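/- A map p : M → N between MV-algebras with p(0) = 0 and p(1) = 1 is a probability map if and only if for all a, b ∈ M with a ⊙ b = 0 it satisfies both p(a ⊕ b) = p(a) ⊕ p(b) and p(a) ⊙ p(b) = 0. -/
import Mathlib


/-- An MV-algebra: a commutative monoid `(M, ⊕, 0)` with an involutive negation
satisfying `a ⊕ ¬0 = ¬0` and the Łukasiewicz axiom. -/
structure MVAlgebra (M : Type*) where
  oplus : M → M → M
  mvneg : M → M
  zero : M
  oplus_assoc : ∀ a b c, oplus (oplus a b) c = oplus a (oplus b c)
  oplus_comm : ∀ a b, oplus a b = oplus b a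
  oplus_zero : ∀ a, oplus a zero = a
  mvneg_mvneg : ∀ a, mvneg (mvneg a) = a
  oplus_neg_zero : ∀ a, oplus a (mvneg zero) = mvneg zero
  luk : ∀ a b, oplus (mvneg (oplus (mvneg a) b)) b = oplus (mvneg (oplus (mvneg b) a)) a

namespace MVAlgebra

variable {M : Type*} (A : MVAlgebra M)

/-- `1 := ¬0`. -/
def one : M := A.mvneg A.zero

/-- `a ⊙ b := ¬(¬a ⊕ ¬b)`. -/
def otimes (a b : M) : M := A.mvneg (A.oplus (A.mvneg a) (A.mvneg b))

/-- `a ⊖ b := a ⊙ ¬b`. -/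
def ominus (a b : M) : M := A.otimes a (A.mvneg b)

/-- `a ∨ b := ¬(¬a ⊕ b) ⊕ b`. -/
def sup (a b : M) : M := A.oplus (A.mvneg (A.oplus (A.mvneg a) b)) b

/-- `a ∧ b := a ⊙ (¬a ⊕ b)`. -/
def inf (a b : M) : M := A.otimes a (A.oplus (A.mvneg a) b)

/-- The natural order: `a ≤ b` iff `¬a ⊕ b = 1`. -/
def le (a b : M) : Prop := A.oplus (A.mvneg a) b = A.one

end MVAlgebra

/-- A probability map `p : M → N` between MV-algebras:
(P1) `p(a ⊕ b) = p(a) ⊕ p(b ∧ ¬a)`, (P2) `p(¬a) = ¬p(a)`, (P3) `p(1) = 1`. -/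
structure IsProbabilityMap {M N : Type*} (A : MVAlgebra M) (B : MVAlgebra N)
    (p : M → N) : Prop where
  p1 : ∀ a b, p (A.oplus a b) = B.oplus (p a) (p (A.inf b (A.mvneg a)))
  p2 : ∀ a, p (A.mvneg a) = B.mvneg (p a)
  p3 : p A.one = B.one

namespace MVAux

variable {M : Type*} (A : MVAlgebra M)

lemma neg_one : A.mvneg A.one = A.zero := A.mvneg_mvneg A.zero

lemma zero_oplus (a : M) : A.oplus A.zero a = a := by
  rw [A.oplus_comm, A.oplus_zero]

lemma oplus_one (a : M) : A.oplus a A.one = A.one := A.oplus_neg_zero a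

lemma one_oplus (a : M) : A.oplus A.one a = A.one := by
  rw [A.oplus_comm]; exact oplus_one A a

lemma neg_oplus_self (a : M) : A.oplus (A.mvneg a) a = A.one := by
  have h := A.luk A.one a
  rw [neg_one, zero_oplus, oplus_one] at h
  exact h

lemma oplus_neg_self (a : M) : A.oplus a (A.mvneg a) = A.one := by
  rw [A.oplus_comm]; exact neg_oplus_self A a

lemma le_antisymm' {a b : M} (hab : A.le a b) (hba : A.le b a) : a = b := by
  have h := A.luk a b
  unfold MVAlgebra.le at hab hba
  rw [hab, hba, neg_one, zero_oplus, zero_oplus] at h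
  exact h.symm

lemma compl_unique {c d : M} (h1 : A.oplus c d = A.one)
    (h2 : A.otimes c d = A.zero) : d = A.mvneg c := by
  apply le_antisymm' A
  · show A.oplus (A.mvneg d) (A.mvneg c) = A.one
    have h' : A.mvneg (A.oplus (A.mvneg c) (A.mvneg d)) = A.zero := h2
    have h3 := congrArg A.mvneg h'
    rw [A.mvneg_mvneg] at h3
    rw [A.oplus_comm]
    exact h3
  · show A.oplus (A.mvneg (A.mvneg c)) d = A.one
    rw [A.mvneg_mvneg]; exact h1

lemma neg_eq_zero {a : M} (h : a = A.one) : A.mvneg a = A.zero := by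
  rw [h]; exact neg_one A

/-- `b ∧ ¬a = ¬(¬(b ⊕ a) ⊕ a)` -/
lemma inf_neg_eq (a b : M) :
    A.inf b (A.mvneg a) = A.mvneg (A.oplus (A.mvneg (A.oplus b a)) a) := by
  unfold MVAlgebra.inf MVAlgebra.otimes
  congr 1
  have h := A.luk a (A.mvneg b)
  rw [A.mvneg_mvneg] at h
  rw [A.oplus_comm (A.mvneg b), A.oplus_comm (A.mvneg b) (A.mvneg a), h]

lemma oplus_inf (a b : M) :
    A.oplus a (A.inf b (A.mvneg a)) = A.oplus a b := by
  rw [inf_neg_eq, A.oplus_comm]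
  have h := A.luk (A.oplus b a) a
  rw [h]
  have h2 : A.oplus (A.mvneg a) (A.oplus b a) = A.one := by
    rw [A.oplus_comm b a, ← A.oplus_assoc, neg_oplus_self, one_oplus]
  rw [h2, neg_one, zero_oplus, A.oplus_comm]

lemma otimes_inf (a b : M) :
    A.otimes a (A.inf b (A.mvneg a)) = A.zero := by
  rw [inf_neg_eq]
  unfold MVAlgebra.otimes
  rw [A.mvneg_mvneg]
  apply neg_eq_zero
  rw [A.oplus_comm (A.mvneg (A.oplus b a)) a, ← A.oplus_assoc, neg_oplus_self, one_oplus]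

lemma le_decomp {a b : M} (h : A.le a b) :
    A.oplus a (A.otimes b (A.mvneg a)) = b := by
  unfold MVAlgebra.le at h
  unfold MVAlgebra.otimes
  rw [A.mvneg_mvneg, A.oplus_comm, A.luk, h, neg_one, zero_oplus]

lemma inf_of_one {a b : M} (h : A.oplus (A.mvneg a) (A.mvneg b) = A.one) :
    A.inf b (A.mvneg a) = b := by
  unfold MVAlgebra.inf MVAlgebra.otimes
  rw [A.oplus_comm (A.mvneg b) (A.mvneg a), h, neg_one, A.oplus_zero, A.mvneg_mvneg]

end MVAux

/-- A normalised map is a probability map iff, whenever `a ⊙ b = 0`,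
it satisfies `p(a ⊕ b) = p(a) ⊕ p(b)` and `p(a) ⊙ p(b) = 0`. -/
theorem probabilityMap_iff {M N : Type*} (A : MVAlgebra M) (B : MVAlgebra N)
    (p : M → N) (h0 : p A.zero = B.zero) (h1 : p A.one = B.one) :
    IsProbabilityMap A B p ↔
      ∀ a b : M, A.otimes a b = A.zero →
        p (A.oplus a b) = B.oplus (p a) (p b) ∧ B.otimes (p a) (p b) = B.zero := by
  constructor
  · intro hp a b hab
    have hab1 : A.oplus (A.mvneg a) (A.mvneg b) = A.one := by
      have h := congrArg A.mvneg hab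
      unfold MVAlgebra.otimes at h
      rw [A.mvneg_mvneg] at h
      exact h
    constructor
    · rw [hp.p1 a b, MVAux.inf_of_one A hab1]
    · have hle : A.le b (A.mvneg a) := by
        show A.oplus (A.mvneg b) (A.mvneg a) = A.one
        rw [A.oplus_comm]; exact hab1
      have hdec := MVAux.le_decomp A hle
      set c := A.otimes (A.mvneg a) (A.mvneg b) with hc
      have h2 : B.mvneg (p a) = B.oplus (p b) (p (A.inf c (A.mvneg b))) := by
        rw [← hp.p2 a, ← hdec, hp.p1]
      show B.mvneg (B.oplus (B.mvneg (p a)) (B.mvneg (p b))) = B.zero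
      apply MVAux.neg_eq_zero
      rw [B.oplus_comm, h2, ← B.oplus_assoc, MVAux.neg_oplus_self, MVAux.one_oplus]
  · intro H
    have hp2 : ∀ a, p (A.mvneg a) = B.mvneg (p a) := by
      intro a
      have hz : A.otimes a (A.mvneg a) = A.zero := by
        show A.mvneg (A.oplus (A.mvneg a) (A.mvneg (A.mvneg a))) = A.zero
        rw [A.mvneg_mvneg, MVAux.neg_oplus_self]
        exact MVAux.neg_one A
      obtain ⟨e1, e2⟩ := H a (A.mvneg a) hz
      have hone : B.oplus (p a) (p (A.mvneg a)) = B.one := by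
        rw [← e1, MVAux.oplus_neg_self, h1]
      exact MVAux.compl_unique B hone e2
    refine ⟨?_, hp2, h1⟩
    intro a b
    obtain ⟨e1, _⟩ := H a (A.inf b (A.mvneg a)) (MVAux.otimes_inf A a b)
    rw [MVAux.oplus_inf] at e1
    exact e1
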